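/- Let T ≥ 1, let O, O' be m×m unitary matrices over ℂ, let P be an m×m orthogonal projection matrix (Pᴴ = P and P·P = P) with O·(1 − P) = O'·(1 − P), and let U_1, …, U_T be m×m unitary matrices. Define vectors by ψ_0 = φ_0 = v for some vector v : Fin m → ℂ, and ψ_{t+1} = U_{t+1}·O·ψ_t, φ_{t+1} = U_{t+1}·O'·φ_t for 0 ≤ t < T. Then ∑_{t=0}^{T−1} ‖P·ψ_t‖² ≥ ‖ψ_T − φ_T‖² / (4T), where ‖·‖ is the Euclidean norm. -/

import Mathlib

open Matrix

/-- The Euclidean norm of a complex vector. -/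
noncomputable def euclNorm {m : ℕ} (v : Fin m → ℂ) : ℝ :=
  Real.sqrt (∑ i, ‖v i‖ ^ 2)

lemma euclNorm_eq {m : ℕ} (v : Fin m → ℂ) :
    euclNorm v = ‖(WithLp.equiv 2 (Fin m → ℂ)).symm v‖ := by
  rw [EuclideanSpace.norm_eq, euclNorm]
  simp

lemma euclNorm_nonneg {m : ℕ} (v : Fin m → ℂ) : 0 ≤ euclNorm v := by
  rw [euclNorm_eq]; exact norm_nonneg _

lemma euclNorm_sub_le {m : ℕ} (x y z : Fin m → ℂ) :
    euclNorm (x - z) ≤ euclNorm (x - y) + euclNorm (y - z) := by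
  simp only [euclNorm_eq, WithLp.equiv_symm_apply, WithLp.toLp_sub]
  exact norm_sub_le_norm_sub_add_norm_sub _ _ _

lemma euclNorm_sub_le' {m : ℕ} (x y : Fin m → ℂ) :
    euclNorm (x - y) ≤ euclNorm x + euclNorm y := by
  simp only [euclNorm_eq, WithLp.equiv_symm_apply, WithLp.toLp_sub]
  exact norm_sub_le _ _

lemma euclNorm_sq {m : ℕ} (v : Fin m → ℂ) :
    euclNorm v ^ 2 = (star v ⬝ᵥ v).re := by
  rw [euclNorm, Real.sq_sqrt (by positivity)]
  simp only [dotProduct, Pi.star_apply, Complex.star_def, Complex.re_sum]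
  congr 1; ext i
  rw [mul_comm, Complex.mul_conj]
  simp [Complex.sq_norm, Complex.normSq_apply]

lemma euclNorm_mulVec {m : ℕ} (A : Matrix (Fin m) (Fin m) ℂ)
    (hA : A ∈ Matrix.unitaryGroup (Fin m) ℂ) (v : Fin m → ℂ) :
    euclNorm (A.mulVec v) = euclNorm v := by
  have h1 : star A * A = 1 := Matrix.mem_unitaryGroup_iff'.mp hA
  have key : star (A *ᵥ v) ⬝ᵥ (A *ᵥ v) = star v ⬝ᵥ v := by
    calc star (A *ᵥ v) ⬝ᵥ (A *ᵥ v)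
        = (star v ᵥ* Aᴴ) ⬝ᵥ (A *ᵥ v) := by rw [Matrix.star_mulVec]
      _ = ((star v ᵥ* Aᴴ) ᵥ* A) ⬝ᵥ v := by rw [Matrix.dotProduct_mulVec]
      _ = (star v ᵥ* (Aᴴ * A)) ⬝ᵥ v := by rw [Matrix.vecMul_vecMul]
      _ = star v ⬝ᵥ v := by
          rw [← Matrix.star_eq_conjTranspose, h1, Matrix.vecMul_one]
  have h2 : euclNorm (A *ᵥ v) ^ 2 = euclNorm v ^ 2 := by
    rw [euclNorm_sq, euclNorm_sq, key]
  nlinarith [euclNorm_nonneg (A.mulVec v), euclNorm_nonneg v]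

theorem hybrid_cauchy_schwarz {m T : ℕ} (hT : 1 ≤ T)
    (O O' P : Matrix (Fin m) (Fin m) ℂ)
    (hO : O ∈ Matrix.unitaryGroup (Fin m) ℂ)
    (hO' : O' ∈ Matrix.unitaryGroup (Fin m) ℂ)
    (hP1 : P.conjTranspose = P) (hP2 : P * P = P)
    (hOP : O * (1 - P) = O' * (1 - P))
    (U : ℕ → Matrix (Fin m) (Fin m) ℂ)
    (hU : ∀ t, 1 ≤ t → t ≤ T → U t ∈ Matrix.unitaryGroup (Fin m) ℂ)
    (v : Fin m → ℂ) (ψ φ : ℕ → Fin m → ℂ)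
    (hψ0 : ψ 0 = v) (hφ0 : φ 0 = v)
    (hψ : ∀ t, t < T → ψ (t + 1) = (U (t + 1)).mulVec (O.mulVec (ψ t)))
    (hφ : ∀ t, t < T → φ (t + 1) = (U (t + 1)).mulVec (O'.mulVec (φ t))) :
    ∑ t ∈ Finset.range T, euclNorm (P.mulVec (ψ t)) ^ 2
      ≥ euclNorm (ψ T - φ T) ^ 2 / (4 * T) := by
  have hD : O - O' = (O - O') * P := by
    have h0 : (O - O') * (1 - P) = 0 := by rw [sub_mul, hOP, sub_self]
    rw [mul_sub, mul_one, sub_eq_zero] at h0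
    exact h0
  have key : ∀ t, t ≤ T →
      euclNorm (ψ t - φ t) ≤ 2 * ∑ s ∈ Finset.range t, euclNorm (P.mulVec (ψ s)) := by
    intro t
    induction t with
    | zero =>
      intro _
      simp [hψ0, hφ0, euclNorm]
    | succ t ih =>
      intro ht1
      have ht : t < T := ht1
      have ihh := ih (le_of_lt ht)
      have e1 : ψ (t + 1) - φ (t + 1)
          = (U (t + 1)).mulVec (O.mulVec (ψ t) - O'.mulVec (φ t)) := by
        rw [hψ t ht, hφ t ht, Matrix.mulVec_sub]
      have e2 : euclNorm (ψ (t + 1) - φ (t + 1))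
          = euclNorm (O.mulVec (ψ t) - O'.mulVec (φ t)) := by
        rw [e1, euclNorm_mulVec _ (hU (t + 1) (by omega) (by omega))]
      have e3 : euclNorm (O.mulVec (ψ t) - O'.mulVec (φ t))
          ≤ euclNorm (O.mulVec (ψ t) - O'.mulVec (ψ t))
            + euclNorm (O'.mulVec (ψ t) - O'.mulVec (φ t)) :=
        euclNorm_sub_le _ _ _
      have e4 : O.mulVec (ψ t) - O'.mulVec (ψ t)
          = O.mulVec (P.mulVec (ψ t)) - O'.mulVec (P.mulVec (ψ t)) := by
        rw [← Matrix.sub_mulVec, ← Matrix.sub_mulVec, Matrix.mulVec_mulVec, ← hD]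
      have e5 : euclNorm (O.mulVec (ψ t) - O'.mulVec (ψ t))
          ≤ 2 * euclNorm (P.mulVec (ψ t)) := by
        rw [e4]
        calc euclNorm (O.mulVec (P.mulVec (ψ t)) - O'.mulVec (P.mulVec (ψ t)))
            ≤ euclNorm (O.mulVec (P.mulVec (ψ t)))
              + euclNorm (O'.mulVec (P.mulVec (ψ t))) := euclNorm_sub_le' _ _
          _ = 2 * euclNorm (P.mulVec (ψ t)) := by
              rw [euclNorm_mulVec _ hO, euclNorm_mulVec _ hO']; ring
      have e6 : euclNorm (O'.mulVec (ψ t) - O'.mulVec (φ t))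
          = euclNorm (ψ t - φ t) := by
        rw [← Matrix.mulVec_sub, euclNorm_mulVec _ hO']
      rw [Finset.sum_range_succ]
      calc euclNorm (ψ (t + 1) - φ (t + 1))
          ≤ 2 * euclNorm (P.mulVec (ψ t)) + euclNorm (ψ t - φ t) := by
            rw [e2]; refine e3.trans ?_; rw [e6]; gcongr
        _ ≤ 2 * euclNorm (P.mulVec (ψ t))
            + 2 * ∑ s ∈ Finset.range t, euclNorm (P.mulVec (ψ s)) := by linarith
        _ = 2 * ((∑ s ∈ Finset.range t, euclNorm (P.mulVec (ψ s)))
            + euclNorm (P.mulVec (ψ t))) := by ring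
  have hkey := key T le_rfl
  have hCS : (∑ s ∈ Finset.range T, euclNorm (P.mulVec (ψ s))) ^ 2
      ≤ T * ∑ s ∈ Finset.range T, euclNorm (P.mulVec (ψ s)) ^ 2 := by
    have := sq_sum_le_card_mul_sum_sq (s := Finset.range T)
      (f := fun s => euclNorm (P.mulVec (ψ s)))
    simpa using this
  have hE : 0 ≤ euclNorm (ψ T - φ T) := euclNorm_nonneg _
  have hS : 0 ≤ ∑ s ∈ Finset.range T, euclNorm (P.mulVec (ψ s)) :=
    Finset.sum_nonneg fun s _ => euclNorm_nonneg _
  have hTpos : (0:ℝ) < 4 * T := by positivity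
  rw [ge_iff_le, div_le_iff₀ hTpos]
  nlinarith [hkey, hCS, hE, hS]
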